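/- Let X ⊆ Σ^ℤ be a subshift and φ̃ : X̃ → X a topological conjugacy with coding windows [-L̃, L̃] for φ̃ and [-L, L] for φ̃⁻¹, given by a one-block map Φ̃ : Σ̃ → Σ (so L̃ = 0). Define Φ̂ on (2L+1)-blocks of X̃ by Φ̂(x̃_{[-L,L]}) = Φ̃(x̃₀). Then Φ̂⁻¹(Σ_synchro(X)) ⊆ Σ_synchro(X̃^{⟨[-L,L]⟩}): every (2L+1)-block of X̃ whose central symbol maps to a synchronizing symbol of X is a synchronizing symbol of the higher block system X̃^{⟨[-L,L]⟩}. -/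

import Mathlib

/-- The shift on `Σ^ℤ`: `(x_i)_{i∈ℤ} ↦ (x_{i+1})_{i∈ℤ}`. -/
def shift {A : Type*} (x : ℤ → A) : ℤ → A := fun i => x (i + 1)

/-- The word `x_{[a,b]}` carried by the block of `x` on the interval `[a, b]`. -/
def block {A : Type*} (x : ℤ → A) (a b : ℤ) : List A :=
  (List.range (b + 1 - a).toNat).map fun k => x (a + k)

/-- A word is admissible for `X` if it appears in a point of `X`. -/
def Admissible {A : Type*} (X : Set (ℤ → A)) (w : List A) : Prop :=
  ∃ x ∈ X, ∃ n : ℤ, ∀ (k : ℕ) (h : k < w.length), x (n + k) = w.get ⟨k, h⟩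

/-- A word `v` is synchronizing for `X` if it is admissible and whenever `uv` and `vw`
are admissible, so is `uvw`. -/
def IsSyncWord {A : Type*} (X : Set (ℤ → A)) (v : List A) : Prop :=
  Admissible X v ∧ ∀ u w : List A, Admissible X (u ++ v) → Admissible X (v ++ w) →
    Admissible X (u ++ v ++ w)

/-- A subshift: a nonempty, closed, shift-invariant subset of `Σ^ℤ`. -/
def IsSubshift {A : Type*} [TopologicalSpace A] (X : Set (ℤ → A)) : Prop :=
  X.Nonempty ∧ IsClosed X ∧ shift '' X = X

/-- Topological transitivity of a subshift, expressed on its language: any two admissible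
words can be joined by an admissible transition word. -/
def LangTransitive {A : Type*} (X : Set (ℤ → A)) : Prop :=
  ∀ u v : List A, Admissible X u → Admissible X v → ∃ w, Admissible X (u ++ w ++ v)

/-- A synchronizing subshift: topologically transitive with a synchronizing word. -/
def SyncSubshift {A : Type*} (X : Set (ℤ → A)) : Prop :=
  LangTransitive X ∧ ∃ v : List A, IsSyncWord X v

/-- A strongly synchronizing subshift: synchronizing symbols appear uniformly close
(within distance `Q`) to synchronizing words. -/
def StronglySync {A : Type*} (X : Set (ℤ → A)) : Prop :=
  SyncSubshift X ∧ ∃ Q : ℕ, ∀ x ∈ X, ∀ I₁ I₂ : ℤ, I₁ ≤ I₂ →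
    IsSyncWord X (block x I₁ I₂) →
    ∃ i : ℤ, I₁ - Q ≤ i ∧ i ≤ I₂ + Q ∧ IsSyncWord X [x i]

/-- The higher block system `X^{⟨[a,b]⟩}` of `X`, over the alphabet of words. -/
def higherBlock {A : Type*} (X : Set (ℤ → A)) (a b : ℤ) : Set (ℤ → List A) :=
  { y | ∃ x ∈ X, ∀ i : ℤ, y i = block x (i + a) (i + b) }

section Aux
variable {A : Type*}

private lemma coe_list_eq (l : List ℕ) :
    (do let a ← l; pure ((a : ℤ))) = l.map (fun a : ℕ => (a : ℤ)) := by
  induction l with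
  | nil => rfl
  | cons h t ih => simpa using ih

lemma block_def' (x : ℤ → A) (a b : ℤ) :
    block x a b = (List.range (b + 1 - a).toNat).map (fun k : ℕ => x (a + (k : ℤ))) := by
  unfold block
  show List.map _ (do let a ← List.range (b + 1 - a).toNat; pure ((a : ℤ))) = _
  rw [coe_list_eq, List.map_map]
  rfl

lemma block_length (x : ℤ → A) (a b : ℤ) : (block x a b).length = (b + 1 - a).toNat := by
  rw [block_def', List.length_map, List.length_range]

lemma block_get (x : ℤ → A) (a b : ℤ) (k : ℕ) (h : k < (block x a b).length) :
    (block x a b).get ⟨k, h⟩ = x (a + k) := by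
  have h' : k < (b + 1 - a).toNat := by rw [← block_length x a b]; exact h
  simp [List.get_eq_getElem, block_def', List.getElem_map, List.getElem_range]

lemma block_getElem (x : ℤ → A) (a b : ℤ) (k : ℕ) (h : k < (block x a b).length) :
    (block x a b)[k] = x (a + k) := by
  have h2 := block_get x a b k h
  simpa using h2

lemma block_congr {x x' : ℤ → A} {a b : ℤ} (h : ∀ j, a ≤ j → j ≤ b → x j = x' j) :
    block x a b = block x' a b := by
  rw [block_def', block_def']
  apply List.map_congr_left
  intro k hk
  simp only [List.mem_range] at hk
  exact h _ (by omega) (by omega)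

lemma block_single (x : ℤ → A) (c : ℤ) : block x c c = [x c] := by
  have h : (c + 1 - c).toNat = 1 := by omega
  rw [block_def', h]
  simp [List.range_succ]

lemma block_snoc (x : ℤ → A) (a b : ℤ) (h : a ≤ b + 1) :
    block x a (b + 1) = block x a b ++ [x (b + 1)] := by
  have h1 : (b + 1 + 1 - a).toNat = (b + 1 - a).toNat + 1 := by omega
  have h2 : a + ((b + 1 - a).toNat : ℤ) = b + 1 := by omega
  rw [block_def', block_def', h1, List.range_succ, List.map_append]
  congr 1
  simp only [List.map_cons, List.map_nil]
  rw [h2]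

lemma block_append (x : ℤ → A) (a c b : ℤ) (h1 : a ≤ c + 1) (h2 : c ≤ b) :
    block x a c ++ block x (c + 1) b = block x a b := by
  revert h2
  refine Int.le_induction (motive := fun b _ => block x a c ++ block x (c + 1) b = block x a b) ?_ ?_ b
  · show block x a c ++ block x (c + 1) c = block x a c
    have h0 : (c + 1 - (c + 1)).toNat = 0 := by omega
    rw [block_def' x (c+1) c]
    simp [h0]
  · intro n hn ih
    show block x a c ++ block x (c + 1) (n + 1) = block x a (n + 1)
    rw [block_snoc x (c+1) n (by omega), block_snoc x a n (by omega),
      ← List.append_assoc, ih]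

lemma block_shift (x : ℤ → A) (a b d : ℤ) :
    block (fun j => x (j + d)) a b = block x (a + d) (b + d) := by
  rw [block_def', block_def']
  have h : b + d + 1 - (a + d) = b + 1 - a := by ring
  rw [h]
  apply List.map_congr_left
  intro k _
  show x (a + k + d) = x (a + d + k)
  congr 1
  ring

lemma block_eq_apply {x x' : ℤ → A} {a b a' b' : ℤ}
    (h : block x a b = block x' a' b') (t : ℕ) (ht : (t : ℤ) < b + 1 - a) :
    x (a + t) = x' (a' + t) := by
  have h1 : t < (block x a b).length := by rw [block_length]; omega
  have h2 : t < (block x' a' b').length := by rw [← h]; exact h1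
  rw [← block_get x a b t h1, ← block_get x' a' b' t h2]
  simp [h]

lemma mem_shift {X : Set (ℤ → A)} (hshift : shift '' X = X) {x : ℤ → A} (hx : x ∈ X) (d : ℤ) :
    (fun j => x (j + d)) ∈ X := by
  induction d using Int.induction_on with
  | zero => simpa using hx
  | succ k ih =>
      have h : (fun j : ℤ => x (j + ((k : ℤ) + 1))) = shift (fun j => x (j + k)) := by
        funext j; show x (j + (k + 1)) = x (j + 1 + k); congr 1; ring
      rw [h, ← hshift]
      exact Set.mem_image_of_mem _ ih
  | pred k ih =>
      have hmem : (fun j : ℤ => x (j + -(k : ℤ))) ∈ shift '' X := by rw [hshift]; exact ih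
      obtain ⟨p, hp, hsp⟩ := hmem
      have h : p = fun j : ℤ => x (j + (-(k : ℤ) - 1)) := by
        funext j
        have h2 := congrFun hsp (j - 1)
        show p j = x (j + (-(k : ℤ) - 1))
        rw [show p j = shift p (j - 1) from by simp [shift], h2]
        congr 1
        ring
      rwa [← h]

lemma block_is_admissible {X : Set (ℤ → A)} {x : ℤ → A} (hx : x ∈ X) (a b : ℤ) :
    Admissible X (block x a b) := by
  refine ⟨x, hx, a, fun k h => ?_⟩
  rw [block_get]

end Aux

/-- Lemma 2.2: for a one-block conjugacy `φ̃ : X̃ → X` given by `Φ̃ : Σ̃ → Σ` whose inverse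
has coding window `[-L, L]`, every `(2L+1)`-block of `X̃` whose central symbol maps to a
synchronizing symbol of `X` is a synchronizing symbol of the higher block system
`X̃^{⟨[-L, L]⟩}`. -/
theorem stmt18 {A B : Type*} [Fintype A] [Fintype B]
    [TopologicalSpace A] [DiscreteTopology A] [TopologicalSpace B] [DiscreteTopology B]
    (X : Set (ℤ → A)) (Xt : Set (ℤ → B)) (hX : IsSubshift X) (hXt : IsSubshift Xt)
    (Φ : B → A) (G : (ℤ → A) → (ℤ → B))
    (hF : ∀ x ∈ Xt, (fun i => Φ (x i)) ∈ X)
    (hG : ∀ y ∈ X, G y ∈ Xt)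
    (hGF : ∀ x ∈ Xt, G (fun i => Φ (x i)) = x)
    (hFG : ∀ y ∈ X, (fun i => Φ (G y i)) = y)
    (L : ℤ) (hL : 0 ≤ L)
    (hGwin : ∀ y ∈ X, ∀ y' ∈ X, ∀ i : ℤ,
      (∀ j : ℤ, i - L ≤ j → j ≤ i + L → y j = y' j) → G y i = G y' i)
    (xt : ℤ → B) (hxt : xt ∈ Xt) (i : ℤ)
    (hsync : IsSyncWord X [Φ (xt i)]) :
    IsSyncWord (higherBlock Xt (-L) L) [block xt (i - L) (i + L)] := by
  set v := block xt (i - L) (i + L) with hv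
  constructor
  · -- admissibility of [v]
    refine ⟨fun q => block xt (q + -L) (q + L), ⟨xt, hxt, fun q => rfl⟩, i, ?_⟩
    intro k hk
    have hk0 : k = 0 := by simpa using hk
    subst hk0
    show block xt (i + (0 : ℕ) + -L) (i + (0 : ℕ) + L) = _
    simp only [List.get_eq_getElem, List.getElem_singleton, hv]
    congr 1 <;> push_cast <;> ring
  · intro u w h1 h2
    obtain ⟨y1, ⟨x1, hx1, hy1⟩, n1, H1⟩ := h1
    obtain ⟨y2, ⟨x2, hx2, hy2⟩, n2, H2⟩ := h2
    set N1 := u.length with hN1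
    set N2 := w.length with hN2
    set m : ℤ := n1 + N1 with hm
    -- key block identities
    have hlen1 : (u ++ [v]).length = N1 + 1 := by simp [hN1]
    have hblk1 : block x1 (m + -L) (m + L) = block xt (i - L) (i + L) := by
      have h := H1 N1 (by omega)
      rw [hy1] at h
      rw [show n1 + (N1 : ℤ) = m from rfl] at h
      rw [h, ← hv]
      simp [List.get_eq_getElem, hN1]
    have hblk2 : block x2 (n2 + -L) (n2 + L) = block xt (i - L) (i + L) := by
      have h := H2 0 (by simp)
      rw [hy2] at h
      norm_num at h
      rw [h, ← hv]
    have fact1 : ∀ t : ℕ, (t : ℤ) ≤ 2 * L → x1 (m + -L + t) = xt (i - L + t) := by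
      intro t ht
      exact block_eq_apply hblk1 t (by omega)
    have fact2 : ∀ t : ℕ, (t : ℤ) ≤ 2 * L → x2 (n2 + -L + t) = xt (i - L + t) := by
      intro t ht
      exact block_eq_apply hblk2 t (by omega)
    set d : ℤ := n2 - m with hd
    have hx2' : (fun j => x2 (j + d)) ∈ Xt := mem_shift hXt.2.2 hx2 d
    set x2' : ℤ → B := fun j => x2 (j + d) with hx2'def
    have hagree : ∀ p : ℤ, m - L ≤ p → p ≤ m + L → x1 p = x2' p := by
      intro p hp1 hp2
      have htn : ((p - (m - L)).toNat : ℤ) = p - m + L := by omega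
      have e1 : x1 p = x1 (m + -L + ((p - (m - L)).toNat : ℤ)) := by congr 1; omega
      have e2 : x2' p = x2 (n2 + -L + ((p - (m - L)).toNat : ℤ)) := by
        show x2 (p + d) = _
        congr 1; omega
      rw [e1, e2, fact1 _ (by omega), fact2 _ (by omega)]
    have hx1m : x1 m = xt i := by
      have h := fact1 L.toNat (by omega)
      rw [show m + -L + (L.toNat : ℤ) = m from by omega,
        show i - L + (L.toNat : ℤ) = i from by omega] at h
      exact h
    have hx2m : x2' m = xt i := by
      have h := fact2 L.toNat (by omega)
      rw [show n2 + -L + (L.toNat : ℤ) = n2 from by omega,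
        show i - L + (L.toNat : ℤ) = i from by omega] at h
      show x2 (m + d) = xt i
      rw [show m + d = n2 from by omega]
      exact h
    set y1' : ℤ → A := fun j => Φ (x1 j) with hy1'def
    set y2' : ℤ → A := fun j => Φ (x2' j) with hy2'def
    have hy1'X : y1' ∈ X := hF x1 hx1
    have hy2'X : y2' ∈ X := hF x2' hx2'
    set aU : ℤ := n1 - 2 * L with haU
    set bW : ℤ := m + N2 + 2 * L with hbW
    have hsingle1 : [Φ (xt i)] = block y1' m m := by
      rw [block_single]
      show _ = [Φ (x1 m)]
      rw [hx1m]
    have hsingle2 : [Φ (xt i)] = block y2' m m := by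
      rw [block_single]
      show _ = [Φ (x2' m)]
      rw [hx2m]
    have hUV : Admissible X (block y1' aU (m - 1) ++ [Φ (xt i)]) := by
      suffices hEq : block y1' aU (m - 1) ++ [Φ (xt i)] = block y1' aU m by
        rw [hEq]; exact block_is_admissible hy1'X aU m
      rw [hsingle1]
      have h := block_append y1' aU (m - 1) m (by omega) (by omega)
      rw [show m - 1 + 1 = m from by ring] at h
      exact h
    have hVW : Admissible X ([Φ (xt i)] ++ block y2' (m + 1) bW) := by
      suffices hEq : [Φ (xt i)] ++ block y2' (m + 1) bW = block y2' m bW by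
        rw [hEq]; exact block_is_admissible hy2'X m bW
      rw [hsingle2]
      exact block_append y2' m m bW (by omega) (by omega)
    have hglue := hsync.2 _ _ hUV hVW
    have hEqG : (block y1' aU (m - 1) ++ [Φ (xt i)]) ++ block y2' (m + 1) bW
        = block y1' aU m ++ block y2' (m + 1) bW := by
      congr 1
      rw [hsingle1]
      have h := block_append y1' aU (m - 1) m (by omega) (by omega)
      rw [show m - 1 + 1 = m from by ring] at h
      exact h
    rw [hEqG] at hglue
    obtain ⟨y, hyX, n, Hy⟩ := hglue
    have hy'X : (fun j => y (j + (n - aU))) ∈ X := mem_shift hX.2.2 hyX (n - aU)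
    set y' : ℤ → A := fun j => y (j + (n - aU)) with hy'def
    set len1 : ℕ := (m + 1 - aU).toNat with hlen1'
    have hlistlen : (block y1' aU m ++ block y2' (m + 1) bW).length
        = len1 + (bW + 1 - (m + 1)).toNat := by
      rw [List.length_append, block_length, block_length]
    have hylt : ∀ j : ℤ, aU ≤ j → j ≤ m → y' j = y1' j := by
      intro j hj1 hj2
      set k : ℕ := (j - aU).toNat with hk
      have hklt : k < len1 := by omega
      have hklt2 : k < (block y1' aU m ++ block y2' (m + 1) bW).length := by
        rw [hlistlen]; omega
      have h := Hy k hklt2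
      simp only [List.get_eq_getElem] at h
      rw [List.getElem_append_left (by rw [block_length]; omega)] at h
      rw [block_getElem y1' aU m k (by rw [block_length]; omega)] at h
      have e1 : y' j = y (n + k) := by
        show y (j + (n - aU)) = y (n + k)
        congr 1; omega
      rw [e1, h]
      congr 1; omega
    have hygt : ∀ j : ℤ, m + 1 ≤ j → j ≤ bW → y' j = y2' j := by
      intro j hj1 hj2
      set k : ℕ := (j - aU).toNat with hk
      have hkge : len1 ≤ k := by omega
      have hklt2 : k < (block y1' aU m ++ block y2' (m + 1) bW).length := by
        rw [hlistlen]; omega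
      have h := Hy k hklt2
      simp only [List.get_eq_getElem] at h
      rw [List.getElem_append_right (by rw [block_length]; omega)] at h
      rw [block_getElem y2' (m+1) bW (k - (block y1' aU m).length) (by
          rw [block_length, block_length]; omega)] at h
      have e1 : y' j = y (n + k) := by
        show y (j + (n - aU)) = y (n + k)
        congr 1; omega
      rw [e1, h]
      rw [block_length]
      congr 1
      omega
    set x' : ℤ → B := G y' with hx'def
    have hx'Xt : x' ∈ Xt := hG y' hy'X
    -- x' agrees with x1 on [n1 - L, m]
    have hxa0 : ∀ p : ℤ, n1 - L ≤ p → p ≤ m → x' p = x1 p := by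
      intro p hp1 hp2
      have hwin : ∀ j : ℤ, p - L ≤ j → j ≤ p + L → y' j = y1' j := by
        intro j hj1 hj2
        rcases le_or_gt j m with hjm | hjm
        · exact hylt j (by omega) hjm
        · rw [hygt j (by omega) (by omega)]
          show Φ (x2' j) = Φ (x1 j)
          rw [← hagree j (by omega) (by omega)]
      have h := hGwin y' hy'X y1' hy1'X p hwin
      rw [hGF x1 hx1] at h
      exact h
    -- x' agrees with x2' on [m, m + N2 + L]
    have hxb0 : ∀ p : ℤ, m ≤ p → p ≤ m + N2 + L → x' p = x2' p := by
      intro p hp1 hp2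
      have hwin : ∀ j : ℤ, p - L ≤ j → j ≤ p + L → y' j = y2' j := by
        intro j hj1 hj2
        rcases le_or_gt j m with hjm | hjm
        · rw [hylt j (by omega) hjm]
          show Φ (x1 j) = Φ (x2' j)
          rw [hagree j (by omega) (by omega)]
        · exact hygt j (by omega) (by omega)
      have h := hGwin y' hy'X y2' hy2'X p hwin
      rw [hGF x2' hx2'] at h
      exact h
    have hxa : ∀ p : ℤ, n1 - L ≤ p → p ≤ m + L → x' p = x1 p := by
      intro p hp1 hp2
      rcases le_or_gt p m with hpm | hpm
      · exact hxa0 p hp1 hpm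
      · rw [hxb0 p (by omega) (by omega), ← hagree p (by omega) (by omega)]
    have hxb : ∀ p : ℤ, m - L ≤ p → p ≤ m + N2 + L → x' p = x2' p := by
      intro p hp1 hp2
      rcases le_or_gt p m with hpm | hpm
      · rw [hxa0 p (by omega) hpm, hagree p (by omega) (by omega)]
      · exact hxb0 p (by omega) hp2
    -- final witness
    refine ⟨fun q => block x' (q + -L) (q + L), ⟨x', hx'Xt, fun q => rfl⟩, n1, ?_⟩
    intro k hk
    have hklen : k < N1 + 1 + N2 := by
      have : (u ++ [v] ++ w).length = N1 + 1 + N2 := by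
        simp only [List.length_append, List.length_singleton, ← hN1, ← hN2]
        try omega
      omega
    simp only [List.get_eq_getElem]
    show block x' (n1 + (k : ℤ) + -L) (n1 + (k : ℤ) + L) = (u ++ [v] ++ w)[k]
    rcases lt_or_ge k (N1 + 1) with hcase | hcase
    · -- left part: from x1
      rw [List.getElem_append_left (by simp; omega)]
      have hcongr : block x' (n1 + (k : ℤ) + -L) (n1 + (k : ℤ) + L)
          = block x1 (n1 + (k : ℤ) + -L) (n1 + (k : ℤ) + L) :=
        block_congr (fun j hj1 hj2 => hxa j (by omega) (by omega))
      rw [hcongr]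
      have h := H1 k (by omega)
      rw [hy1] at h
      simp only [List.get_eq_getElem] at h
      exact h
    · -- right part: from x2
      rw [List.getElem_append_right (by simp; omega)]
      have hcongr : block x' (n1 + (k : ℤ) + -L) (n1 + (k : ℤ) + L)
          = block x2' (n1 + (k : ℤ) + -L) (n1 + (k : ℤ) + L) :=
        block_congr (fun j hj1 hj2 => hxb j (by omega) (by omega))
      set k2 : ℕ := k - N1 with hk2
      have h := H2 k2 (by simp; omega)
      rw [hy2] at h
      simp only [List.get_eq_getElem] at h
      rw [List.getElem_append_right (by simp; omega)] at h
      rw [hcongr, hx2'def, block_shift]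
      have e1 : n1 + (k : ℤ) + -L + d = n2 + (k2 : ℤ) + -L := by
        have : ((k2 : ℕ) : ℤ) = (k : ℤ) - (N1 : ℤ) := by omega
        omega
      have e2 : n1 + (k : ℤ) + L + d = n2 + (k2 : ℤ) + L := by
        have : ((k2 : ℕ) : ℤ) = (k : ℤ) - (N1 : ℤ) := by omega
        omega
      rw [e1, e2, h]
      congr 1
      simp
      omega
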